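/- Let 0 ≤ r_a and r_a + 1 ≤ r_b, and let G ⊆ ℤ^d be a nonempty set of voxels that is contained in at least one searchlight of radius r_a (i.e. there exists v₀ ∈ ℤ^d with G ⊆ S_{r_a}(v₀)). Then the sets K_{r_a} = {w ∈ ℤ^d : G ⊆ S_{r_a}(w)} and K_{r_b} = {w ∈ ℤ^d : G ⊆ S_{r_b}(w)} are finite, K_{r_a} ⊆ K_{r_b}, and the cardinality of K_{r_b} is strictly greater than the cardinality of K_{r_a}: G is contained in strictly more searchlights of radius r_b than searchlights of radius r_a. (Paper's Theorem 3.) -/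

import Mathlib

/-- Euclidean distance between voxels in the integer lattice `ℤ^d`. -/
noncomputable def vdist {d : ℕ} (v w : Fin d → ℤ) : ℝ :=
  Real.sqrt (∑ i, ((v i : ℝ) - (w i : ℝ)) ^ 2)

/-- The searchlight of radius `r` centered at voxel `v`. -/
def searchlight {d : ℕ} (r : ℝ) (v : Fin d → ℤ) : Set (Fin d → ℤ) :=
  {w | vdist w v ≤ r}

private noncomputable def vemb {d : ℕ} (v : Fin d → ℤ) : EuclideanSpace ℝ (Fin d) :=
  WithLp.toLp 2 (fun i => (v i : ℝ))

private lemma vdist_eq_dist {d : ℕ} (v w : Fin d → ℤ) :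
    vdist v w = dist (vemb v) (vemb w) := by
  rw [EuclideanSpace.dist_eq]
  simp [vdist, vemb, Real.dist_eq, sq_abs]

private lemma vdist_triangle {d : ℕ} (u v w : Fin d → ℤ) :
    vdist u w ≤ vdist u v + vdist v w := by
  simp only [vdist_eq_dist]; exact dist_triangle _ _ _

private lemma finite_centers {d : ℕ} (g : Fin d → ℤ) (r : ℝ) :
    {w : Fin d → ℤ | vdist g w ≤ r}.Finite := by
  apply Set.Finite.subset
    (Set.Finite.pi (fun i => Set.finite_Icc (g i - ⌈r⌉) (g i + ⌈r⌉)))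
  intro w hw
  simp only [Set.mem_setOf_eq] at hw
  have hr : 0 ≤ r := le_trans (Real.sqrt_nonneg _) hw
  have h0 : (0:ℝ) ≤ ∑ i, ((g i : ℝ) - (w i : ℝ)) ^ 2 :=
    Finset.sum_nonneg fun _ _ => sq_nonneg _
  have hsum : ∑ i, ((g i : ℝ) - (w i : ℝ)) ^ 2 ≤ r ^ 2 := by
    have := pow_le_pow_left₀ (Real.sqrt_nonneg _) hw 2
    rwa [Real.sq_sqrt h0] at this
  intro i _
  have hterm : ((g i : ℝ) - (w i : ℝ)) ^ 2 ≤ r ^ 2 := by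
    refine le_trans ?_ hsum
    exact Finset.single_le_sum (f := fun j => ((g j : ℝ) - (w j : ℝ)) ^ 2)
      (fun j _ => sq_nonneg _) (Finset.mem_univ i)
  have habs : |((g i : ℝ) - (w i : ℝ))| ≤ r := by
    have := Real.sqrt_le_sqrt hterm
    rwa [Real.sqrt_sq_eq_abs, Real.sqrt_sq hr] at this
  have habs' : |g i - w i| ≤ ⌈r⌉ := by
    have hc : |((g i - w i : ℤ) : ℝ)| ≤ (⌈r⌉ : ℝ) := by
      push_cast
      exact le_trans habs (Int.le_ceil r)
    exact_mod_cast hc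
  rw [abs_le] at habs'
  simp only [Set.mem_Icc]
  omega

private lemma vdist_update {d : ℕ} (w : Fin d → ℤ) (i₀ : Fin d) :
    vdist w (Function.update w i₀ (w i₀ + 1)) = 1 := by
  unfold vdist
  rw [Finset.sum_eq_single i₀]
  · simp
  · intro j _ hj
    simp [Function.update_of_ne hj]
  · intro h
    exact absurd (Finset.mem_univ i₀) h

theorem group_in_more_larger_searchlights (d : ℕ) (hd : 1 ≤ d)
    (ra rb : ℝ) (hra : 0 ≤ ra) (hrb : ra + 1 ≤ rb)
    (G : Set (Fin d → ℤ)) (hGne : G.Nonempty)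
    (v₀ : Fin d → ℤ) (hGv₀ : G ⊆ searchlight ra v₀) :
    {w : Fin d → ℤ | G ⊆ searchlight ra w}.Finite ∧
    {w : Fin d → ℤ | G ⊆ searchlight rb w}.Finite ∧
    {w : Fin d → ℤ | G ⊆ searchlight ra w} ⊆
      {w : Fin d → ℤ | G ⊆ searchlight rb w} ∧
    {w : Fin d → ℤ | G ⊆ searchlight ra w}.ncard <
      {w : Fin d → ℤ | G ⊆ searchlight rb w}.ncard := by
  obtain ⟨g₀, hg₀⟩ := hGne
  set A := {w : Fin d → ℤ | G ⊆ searchlight ra w} with hA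
  set B := {w : Fin d → ℤ | G ⊆ searchlight rb w} with hB
  have hAfin : A.Finite := by
    apply (finite_centers g₀ ra).subset
    intro w hw
    exact hw hg₀
  have hBfin : B.Finite := by
    apply (finite_centers g₀ rb).subset
    intro w hw
    exact hw hg₀
  have hrab : ra ≤ rb := by linarith
  have hAB : A ⊆ B := by
    intro w hw g hg
    exact le_trans (hw hg) hrab
  refine ⟨hAfin, hBfin, hAB, ?_⟩
  -- strictness
  have hAne : A.Nonempty := ⟨v₀, hGv₀⟩
  set i₀ : Fin d := ⟨0, hd⟩
  obtain ⟨w₀, hw₀A, hw₀max⟩ :=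
    Set.Finite.exists_maximalFor (fun w => w i₀) A hAfin hAne
  set w₁ := Function.update w₀ i₀ (w₀ i₀ + 1) with hw₁
  have hw₁B : w₁ ∈ B := by
    intro g hg
    have h1 : vdist g w₁ ≤ vdist g w₀ + vdist w₀ w₁ := vdist_triangle _ _ _
    have h2 : vdist w₀ w₁ = 1 := vdist_update w₀ i₀
    have h3 : vdist g w₀ ≤ ra := hw₀A hg
    have : vdist g w₁ ≤ ra + 1 := by rw [h2] at h1; linarith
    exact le_trans this hrb
  have hw₁A : w₁ ∉ A := by
    intro hmem
    have hle : w₀ i₀ ≤ w₁ i₀ := by simp [hw₁]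
    have := hw₀max (j := w₁) hmem hle
    simp [hw₁] at this
  exact Set.ncard_lt_ncard ((Set.ssubset_iff_of_subset hAB).2 ⟨w₁, hw₁B, hw₁A⟩) hBfin
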